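/- Roos-like spectral bound: Let C ⊆ F_q^{mℓ} be a λ-QT code of index ℓ with nonempty eigenvalue set Ω̄ ⊆ Ω. Let N and M be nonempty subsets of Ω such that MN := { εη/α : ε ∈ M, η ∈ N } ⊆ Ω̄, and let d_N be a positive integer such that every nonzero codeword of D_N has Hamming weight at least d_N. If there exists a consecutive set M′ ⊆ Ω with M ⊆ M′ and |M′| ≤ |M| + d_N − 2, then every nonzero codeword of C has Hamming weight at least min( |M| + d_N − 1, d(ℂ_{MN}) ), where ℂ_{MN} is the eigencode of ∩_{β∈MN} V_β. -/

import Mathlib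

open Polynomial

open scoped Classical in
/-- Hamming weight: the number of nonzero coordinates. -/
noncomputable def wt {ι K : Type*} [Fintype ι] [Zero K] (c : ι → K) : ℕ :=
  (Finset.univ.filter fun i => c i ≠ 0).card

/-- Minimum Hamming weight of a nonzero codeword of `S`, with `⊤` for the zero code. -/
noncomputable def minDist {ι K : Type*} [Fintype ι] [Zero K] (S : Set (ι → K)) : ℕ∞ :=
  sInf {n : ℕ∞ | ∃ c ∈ S, c ≠ 0 ∧ (wt c : ℕ∞) = n}

/-- The λ-constashift by ℓ positions on m×ℓ arrays: row 0 becomes λ times old last row. -/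
def rho {Fq : Type*} [Field Fq] (m ℓ : ℕ) [NeZero m] (lam : Fq)
    (c : ZMod m × Fin ℓ → Fq) : ZMod m × Fin ℓ → Fq :=
  fun p => (if p.1 = 0 then lam else 1) * c (p.1 - 1, p.2)

/-- Reduction of a vector of polynomials mod `X^m - λ`, written as an m×ℓ array. -/
noncomputable def arrOf {Fq : Type*} [Field Fq] (m ℓ : ℕ) [NeZero m] (lam : Fq)
    (v : Fin ℓ → Polynomial Fq) : ZMod m × Fin ℓ → Fq :=
  fun p => ((v p.2) %ₘ (Polynomial.X ^ m - Polynomial.C lam)).coeff (p.1).val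

/-- The λ-constacyclic code of length `m` over `F` with zero set `P`. -/
def Dcode {F : Type*} [Field F] (m : ℕ) (P : Set F) : Set (Fin m → F) :=
  {c | ∀ β ∈ P, ∑ k : Fin m, c k * β ^ (k : ℕ) = 0}

/-- A consecutive subset of Ω: `{αξ^(e+zn) : 0 ≤ z ≤ δ-2}` with `gcd(m,n) = 1`. -/
def IsConsecutive {F : Type*} [Field F] (m : ℕ) (α ξ : F) (E : Set F) : Prop :=
  ∃ e δ n : ℕ, 2 ≤ δ ∧ 0 < n ∧ Nat.Coprime m n ∧
    E = {x | ∃ z < δ - 1, x = α * ξ ^ (e + z * n)}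

/-- The eigenspace of `β` for the polynomial matrix `G`: the null space of `G(β)`. -/
def Vspace {Fq F : Type*} [Field Fq] [Field F] [Algebra Fq F] (ℓ : ℕ)
    (G : Matrix (Fin ℓ) (Fin ℓ) (Polynomial Fq)) (β : F) : Set (Fin ℓ → F) :=
  {v | (G.map fun p => Polynomial.aeval β p).mulVec v = 0}

/-- The eigencode of a set of vectors `V ⊆ F^ℓ`. -/
def eigencode {Fq F : Type*} [Field Fq] [Field F] [Algebra Fq F] (ℓ : ℕ)
    (V : Set (Fin ℓ → F)) : Set (Fin ℓ → Fq) :=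
  {u | ∀ v ∈ V, ∑ j, v j * algebraMap Fq F (u j) = 0}

section Aux

open scoped Classical
open Matrix

lemma wt_pos {ι K : Type*} [Fintype ι] [Zero K] {u : ι → K} (h : u ≠ 0) : 1 ≤ wt u := by
  obtain ⟨i, hi⟩ := Function.ne_iff.1 h
  unfold wt
  exact Finset.card_pos.2 ⟨i, by simpa using hi⟩

lemma wt_le_card_of_supp {ι K : Type*} [Fintype ι] [Zero K] (u : ι → K)
    (S : Finset ι) (h : ∀ i, u i ≠ 0 → i ∈ S) : wt u ≤ S.card := by
  unfold wt
  exact Finset.card_le_card (fun i hi => by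
    simp only [Finset.mem_filter, Finset.mem_univ, true_and] at hi
    exact h i hi)

lemma singleton_bound {F : Type*} [Field F] {ι : Type*} [Fintype ι]
    (S : Finset ι) (U : Submodule F (ι → F)) (d : ℕ)
    (hwt : ∀ u ∈ U, u ≠ 0 → d ≤ wt u)
    (hsupp : ∀ u ∈ U, ∀ i, i ∉ S → u i = 0)
    (hd : d ≤ S.card + 1) :
    Module.finrank F U + d ≤ S.card + 1 := by
  obtain ⟨D, hDS, hDcard⟩ := S.exists_subset_card_eq (n := d - 1) (by omega)
  set T : Finset ι := S \ D with hT
  have hTcard : T.card = S.card - (d - 1) := by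
    rw [hT, Finset.card_sdiff_of_subset hDS, hDcard]
  let f : U →ₗ[F] ({x // x ∈ T} → F) :=
    (LinearMap.funLeft F F (fun i : {x // x ∈ T} => (i : ι))).comp U.subtype
  have hinj : Function.Injective f := by
    rw [← LinearMap.ker_eq_bot, LinearMap.ker_eq_bot']
    intro u hu
    by_contra h0
    have hne : (u : ι → F) ≠ 0 := by
      intro hc; exact h0 (Subtype.ext hc)
    have hle : wt (u : ι → F) ≤ D.card := by
      apply wt_le_card_of_supp
      intro i hi
      by_contra hiD
      by_cases hiS : i ∈ S
      · have hiT : i ∈ T := Finset.mem_sdiff.2 ⟨hiS, hiD⟩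
        exact hi (congrFun hu ⟨i, hiT⟩)
      · exact hi (hsupp u u.2 i hiS)
    have h1 := hwt u u.2 hne
    have h2 := wt_pos hne
    omega
  have hle := LinearMap.finrank_le_finrank_of_injective hinj
  have : Module.finrank F ({x // x ∈ T} → F) = T.card := by
    rw [Module.finrank_fintype_fun_eq_card, Fintype.card_coe]
  omega

lemma li_of_det {F : Type*} [Field F] {ι : Type*} {t : ℕ} (u : Fin t → ι → F) (τ : Fin t → ι)
    (h : (Matrix.of fun z i => u z (τ i)).det ≠ 0) : LinearIndependent F u := by
  rw [Fintype.linearIndependent_iff]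
  intro a ha
  set A : Matrix (Fin t) (Fin t) F := Matrix.of fun z i => u z (τ i) with hA
  have hvm : a ᵥ* A = 0 := by
    ext i
    have := congrFun ha (τ i)
    simpa [Matrix.vecMul, dotProduct, hA] using this
  have haz : a = 0 := by
    have h1 : a ᵥ* (A * A⁻¹) = 0 ᵥ* A⁻¹ := by
      rw [← Matrix.vecMul_vecMul, hvm]
    rwa [Matrix.mul_nonsing_inv A (isUnit_iff_ne_zero.2 h), Matrix.vecMul_one,
      Matrix.zero_vecMul] at h1
  intro i; rw [haz]; rfl

lemma det_scaled {F : Type*} [Field F] {t : ℕ} (b d : Fin t → F) (hd : ∀ i, d i ≠ 0)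
    (hb : Function.Injective b) :
    (Matrix.of fun z i : Fin t => d i * b i ^ (z : ℕ)).det ≠ 0 := by
  have heq : (Matrix.of fun z i : Fin t => d i * b i ^ (z : ℕ))
      = (Matrix.vandermonde b)ᵀ * Matrix.diagonal d := by
    ext z i
    simp [Matrix.mul_diagonal, Matrix.vandermonde, mul_comm]
  rw [heq, Matrix.det_mul, Matrix.det_transpose, Matrix.det_diagonal]
  exact mul_ne_zero (Matrix.det_vandermonde_ne_zero_iff.2 hb)
    (Finset.prod_ne_zero_iff.2 fun i _ => hd i)

lemma roos_core {F : Type*} [Field F] (m : ℕ) [NeZero m] (α ξ : F)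
    (hξ : IsPrimitiveRoot ξ m) (hα : α ≠ 0)
    (M M' N MN : Set F) (hM : M.Nonempty)
    (hMN : MN = {x : F | ∃ ε ∈ M, ∃ η ∈ N, x = ε * η / α})
    (dN : ℕ)
    (hDN : ∀ c ∈ Dcode (F := F) m N, c ≠ 0 → dN ≤ wt c)
    (hM'cons : IsConsecutive m α ξ M')
    (hMM' : M ⊆ M') (hcard : M'.ncard ≤ M.ncard + dN - 2)
    (y : Fin m → F) (hy : y ≠ 0)
    (hyz : ∀ β ∈ MN, ∑ i : Fin m, y i * β ^ (i : ℕ) = 0) :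
    M.ncard + dN ≤ wt y + 1 := by
  obtain ⟨e, δ, n, hδ2, hn, hcop, hM'eq⟩ := hM'cons
  have hm : 0 < m := Nat.pos_of_ne_zero (NeZero.ne m)
  have hξ0 : ξ ≠ 0 := hξ.ne_zero hm.ne'
  have hM'img : M' = (fun z : ℕ => α * ξ ^ (e + z * n)) '' (Set.Iio (δ - 1)) := by
    rw [hM'eq]; ext x
    simp only [Set.mem_setOf_eq, Set.mem_image, Set.mem_Iio]
    constructor
    · rintro ⟨z, hz, rfl⟩; exact ⟨z, hz, rfl⟩
    · rintro ⟨z, hz, rfl⟩; exact ⟨z, hz, rfl⟩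
  have hM'fin : M'.Finite := by
    rw [hM'img]; exact (Set.finite_Iio _).image _
  have hMfin : M.Finite := hM'fin.subset hMM'
  have hMpos : 1 ≤ M.ncard := (Set.ncard_pos hMfin).2 hM
  have hMle : M.ncard ≤ M'.ncard := Set.ncard_le_ncard hMM' hM'fin
  have hM'δ : M'.ncard ≤ δ - 1 := by
    rw [hM'img]
    refine le_trans (Set.ncard_image_le (Set.finite_Iio _)) ?_
    rw [← Finset.coe_Iio, Set.ncard_coe_finset, Nat.card_Iio]
  set S : Finset (Fin m) := Finset.univ.filter (fun i => y i ≠ 0) with hS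
  have hwtS : wt y = S.card := rfl
  have hwm : S.card ≤ m := le_trans (Finset.card_le_univ S) (by simp)
  have hySmem : ∀ i, y i ≠ 0 → i ∈ S := by
    intro i hi; rw [hS]; simp [hi]
  have hySne : ∀ i ∈ S, y i ≠ 0 := by
    intro i hi; rw [hS] at hi; simpa using hi
  set zv : F → (Fin m → F) := fun ε i => y i * (ε / α) ^ (i : ℕ) with hzv
  have hzmem : ∀ ε ∈ M, zv ε ∈ Dcode m N := by
    intro ε hε η hη
    have hβ : ε * η / α ∈ MN := by rw [hMN]; exact ⟨ε, hε, η, hη, rfl⟩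
    rw [← hyz _ hβ]
    refine Finset.sum_congr rfl (fun i _ => ?_)
    rw [hzv]
    simp only []
    rw [mul_assoc, ← mul_pow]
    congr 2
    field_simp
  have hzsupp : ∀ ε, ∀ i, y i = 0 → zv ε i = 0 := by
    intro ε i h; simp [hzv, h]
  set U : Submodule F (Fin m → F) := Submodule.span F (zv '' M) with hU
  set U' : Submodule F (Fin m → F) := Submodule.span F (zv '' M') with hU'
  have hUprop : ∀ u ∈ U, (u ∈ Dcode m N ∧ ∀ i, y i = 0 → u i = 0) := by
    intro u hu
    refine Submodule.span_induction ?_ ?_ ?_ ?_ hu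
    · rintro x ⟨ε, hε, rfl⟩
      exact ⟨hzmem ε hε, hzsupp ε⟩
    · constructor
      · intro η hη; simp [Dcode]
      · intro i _; rfl
    · rintro x x' hx hx' ⟨h1, h2⟩ ⟨h1', h2'⟩
      constructor
      · intro η hη
        have := h1 η hη
        have := h1' η hη
        simp only [Pi.add_apply, add_mul, Finset.sum_add_distrib]
        simp_all
      · intro i hi; simp [Pi.add_apply, h2 i hi, h2' i hi]
    · rintro a x hx ⟨h1, h2⟩
      constructor
      · intro η hη
        have := h1 η hη
        simp only [Pi.smul_apply, smul_eq_mul, mul_assoc, ← Finset.mul_sum]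
        simp_all
      · intro i hi; simp [Pi.smul_apply, h2 i hi]
  obtain ⟨ε0, hε0⟩ := hM
  have hε0ne : ε0 ≠ 0 := by
    have hh := hMM' hε0
    rw [hM'eq] at hh
    obtain ⟨z, hz, rfl⟩ := hh
    exact mul_ne_zero hα (pow_ne_zero _ hξ0)
  have hz0ne : zv ε0 ≠ 0 := by
    obtain ⟨i0, hi0⟩ := Function.ne_iff.1 hy
    refine Function.ne_iff.2 ⟨i0, ?_⟩
    simp only [hzv, Pi.zero_apply]
    exact mul_ne_zero hi0 (pow_ne_zero _ (div_ne_zero hε0ne hα))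
  have hdNw : dN ≤ S.card := by
    refine le_trans (hDN _ (hzmem ε0 hε0) hz0ne) ?_
    apply wt_le_card_of_supp
    intro i hi
    apply hySmem
    intro hyi
    exact hi (hzsupp ε0 i hyi)
  have hsing : Module.finrank F U + dN ≤ S.card + 1 :=
    singleton_bound S U dN
      (fun u hu hune => hDN u (hUprop u hu).1 hune)
      (fun u hu i hiS => (hUprop u hu).2 i (by by_contra hne; exact hiS (hySmem i hne)))
      (by omega)
  have hdifffin : (M' \ M).Finite := hM'fin.diff
  have hsup : U' ≤ U ⊔ Submodule.span F (zv '' (M' \ M)) := by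
    rw [hU', hU, ← Submodule.span_union, ← Set.image_union]
    apply Submodule.span_mono
    apply Set.image_mono
    intro a ha
    by_cases h : a ∈ M
    · exact Set.mem_union_left _ h
    · exact Set.mem_union_right _ ⟨ha, h⟩
  have hrk2 : Module.finrank F U' ≤ Module.finrank F U + (M' \ M).ncard := by
    refine le_trans (Submodule.finrank_mono hsup) ?_
    have hsum := Submodule.finrank_sup_add_finrank_inf_eq U (Submodule.span F (zv '' (M' \ M)))
    have h2 : Module.finrank F (Submodule.span F (zv '' (M' \ M))) ≤ (M' \ M).ncard := by
      have hfin : (zv '' (M' \ M)).Finite := hdifffin.image _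
      have h3 : Module.finrank F
          (Submodule.span F ((hfin.toFinset : Finset (Fin m → F)) : Set (Fin m → F)))
          ≤ hfin.toFinset.card := finrank_span_finset_le_card hfin.toFinset
      rw [Set.Finite.coe_toFinset] at h3
      refine le_trans h3 ?_
      rw [← Set.ncard_eq_toFinset_card (zv '' (M' \ M)) hfin]
      exact Set.ncard_image_le hdifffin
    omega
  have hdiffcard : (M' \ M).ncard = M'.ncard - M.ncard := Set.ncard_diff hMM' hMfin
  set t := min M'.ncard S.card with ht
  obtain ⟨T, hTS, hTcard⟩ := S.exists_subset_card_eq (n := t) (min_le_right _ _)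
  set τ : Fin t → Fin m := fun k => ((T.orderIsoOfFin hTcard k : {x // x ∈ T}) : Fin m) with hτ
  have hτinj : Function.Injective τ := by
    intro a b hab
    exact (T.orderIsoOfFin hTcard).injective (Subtype.ext hab)
  have hτS : ∀ k, τ k ∈ S := fun k => hTS (T.orderIsoOfFin hTcard k).2
  have hζ : IsPrimitiveRoot (ξ ^ n) m := hξ.pow_of_coprime n hcop.symm
  set u : Fin t → (Fin m → F) := fun zz => zv (α * ξ ^ (e + (zz : ℕ) * n)) with hu
  have humem : ∀ zz : Fin t, u zz ∈ zv '' M' := by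
    intro zz
    refine ⟨α * ξ ^ (e + (zz : ℕ) * n), ?_, rfl⟩
    rw [hM'eq]
    refine ⟨(zz : ℕ), ?_, rfl⟩
    calc (zz : ℕ) < t := zz.isLt
      _ ≤ M'.ncard := min_le_left _ _
      _ ≤ δ - 1 := hM'δ
  have hli : LinearIndependent F u := by
    apply li_of_det u τ
    have hEq : (Matrix.of fun zz i => u zz (τ i)) = Matrix.of fun zz i : Fin t =>
        (y (τ i) * ξ ^ (e * (τ i : ℕ))) * (ξ ^ (n * (τ i : ℕ))) ^ (zz : ℕ) := by
      ext zz i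
      simp only [Matrix.of_apply, hu, hzv]
      have hc : α * ξ ^ (e + (zz : ℕ) * n) / α = ξ ^ (e + (zz : ℕ) * n) := by
        field_simp
      rw [hc, ← pow_mul, mul_assoc, ← pow_mul, ← pow_add]
      congr 1
      congr 1
      ring
    rw [hEq]
    apply det_scaled
    · intro i
      exact mul_ne_zero (hySne _ (hτS i)) (pow_ne_zero _ hξ0)
    · intro a b hab
      apply hτinj
      have hab2 : ξ ^ (n * ((τ a : Fin m) : ℕ)) = ξ ^ (n * ((τ b : Fin m) : ℕ)) := hab
      have hab' : (ξ ^ n) ^ ((τ a : Fin m) : ℕ) = (ξ ^ n) ^ ((τ b : Fin m) : ℕ) := by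
        rw [pow_mul, pow_mul] at hab2
        exact hab2
      exact Fin.ext (hζ.pow_inj (τ a).isLt (τ b).isLt hab')
  have hlow : t ≤ Module.finrank F U' := by
    have h1 : Submodule.span F (Set.range u) ≤ U' := by
      rw [Submodule.span_le]
      rintro x ⟨zz, rfl⟩
      exact Submodule.subset_span (humem zz)
    have h2 := finrank_span_eq_card hli
    calc t = Fintype.card (Fin t) := (Fintype.card_fin t).symm
      _ = Module.finrank F (Submodule.span F (Set.range u)) := h2.symm
      _ ≤ Module.finrank F U' := Submodule.finrank_mono h1
  have ht2 : t ≤ M'.ncard := min_le_left _ _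
  have ht3 : t ≤ S.card := min_le_right _ _
  have ht4 : t = M'.ncard ∨ t = S.card := min_choice _ _
  rw [hwtS]
  omega

end Aux

theorem roos_like_spectral_bound
    {Fq F : Type*} [Field Fq] [Fintype Fq] [Field F] [Algebra Fq F]
    (m ℓ : ℕ) [NeZero m] (hcop : Nat.Coprime m (Fintype.card Fq))
    (lam : Fq) (hlam : lam ≠ 0)
    (hsplit : IsSplittingField Fq F (X ^ m - C lam))
    (𝓒 : Submodule Fq (ZMod m × Fin ℓ → Fq))
    (hQT : ∀ c ∈ 𝓒, rho m ℓ lam c ∈ 𝓒)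
    (G : Matrix (Fin ℓ) (Fin ℓ) (Polynomial Fq))
    (htri : ∀ i j, j < i → G i j = 0)
    (hdiv : ∀ j, G j j ∣ X ^ m - C lam)
    (hGen : ∀ v : Fin ℓ → Polynomial Fq,
      arrOf m ℓ lam v ∈ 𝓒 ↔ v ∈ Submodule.span (Polynomial Fq) (Set.range fun i j => G i j))
    (r : ℕ) (hr : orderOf lam = r)
    (α : F) (hα : IsPrimitiveRoot α (r * m))
    (hαm : α ^ m = algebraMap Fq F lam)
    (Ω : Set F) (hΩ : Ω = {x : F | ∃ k < m, x = α * (α ^ r) ^ k})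
    (Ωbar : Set F) (hΩbar : Ωbar = {x ∈ Ω | Polynomial.aeval x G.det = 0})
    (hne : Ωbar.Nonempty)
    (M N : Set F) (hM : M.Nonempty) (hN : N.Nonempty)
    (hMΩ : M ⊆ Ω) (hNΩ : N ⊆ Ω)
    (MN : Set F) (hMN : MN = {x : F | ∃ ε ∈ M, ∃ η ∈ N, x = ε * η / α})
    (hMNsub : MN ⊆ Ωbar)
    (dN : ℕ) (hdN : 0 < dN)
    (hDN : ∀ c ∈ Dcode (F := F) m N, c ≠ 0 → dN ≤ wt c)
    (M' : Set F) (hM'cons : IsConsecutive m α (α ^ r) M')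
    (hMM' : M ⊆ M') (hcard : M'.ncard ≤ M.ncard + dN - 2) :
    ∀ c ∈ 𝓒, c ≠ 0 →
      min ((M.ncard + dN - 1 : ℕ) : ℕ∞)
        (minDist (eigencode (Fq := Fq) ℓ (⋂ β ∈ MN, Vspace ℓ G β))) ≤ (wt c : ℕ∞) := by
  classical
  intro c hc hc0
  have hm : 0 < m := Nat.pos_of_ne_zero (NeZero.ne m)
  -- r is positive
  have hlam1 : lam ^ (Fintype.card Fq - 1) = 1 := FiniteField.pow_card_sub_one_eq_one lam hlam
  have hfino : IsOfFinOrder lam := isOfFinOrder_iff_pow_eq_one.2 ⟨Fintype.card Fq - 1, by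
      have : 1 < Fintype.card Fq := Fintype.one_lt_card
      omega, hlam1⟩
  have hr0 : 0 < r := hr ▸ hfino.orderOf_pos
  have hξ : IsPrimitiveRoot (α ^ r) m := hα.pow (by positivity) rfl
  have hαne : α ≠ 0 := by
    intro h
    rw [h, zero_pow hm.ne'] at hαm
    exact hlam ((_root_.map_eq_zero (algebraMap Fq F)).1 hαm.symm)
  -- the polynomial vector of c
  set pc : Fin ℓ → Polynomial Fq :=
    fun j => ∑ k : Fin m, C (c (((k : ℕ) : ZMod m), j)) * X ^ (k : ℕ) with hpc
  have hmod : ∀ j, pc j %ₘ (X ^ m - C lam) = pc j := by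
    intro j
    refine (Polynomial.modByMonic_eq_self_iff (monic_X_pow_sub_C _ (NeZero.ne m))).2 ?_
    rw [degree_X_pow_sub_C hm]
    refine lt_of_le_of_lt (Polynomial.degree_sum_le _ _) ?_
    rw [Finset.sup_lt_iff (by exact_mod_cast WithBot.bot_lt_coe m)]
    intro k _
    exact lt_of_le_of_lt (Polynomial.degree_C_mul_X_pow_le _ _) (by exact_mod_cast k.isLt)
  have harr : arrOf m ℓ lam pc = c := by
    funext p
    obtain ⟨kz, j⟩ := p
    show (pc j %ₘ (X ^ m - C lam)).coeff kz.val = c (kz, j)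
    rw [hmod j, hpc]
    rw [Polynomial.finset_sum_coeff]
    rw [Finset.sum_eq_single (⟨kz.val, ZMod.val_lt kz⟩ : Fin m)]
    · have h2 : (((kz.val) : ℕ) : ZMod m) = kz := ZMod.natCast_rightInverse kz
      simp [Polynomial.coeff_C_mul, Polynomial.coeff_X_pow, h2]
    · intro k _ hk
      simp only [Polynomial.coeff_C_mul, Polynomial.coeff_X_pow]
      rw [if_neg, mul_zero]
      intro h
      exact hk (Fin.ext h.symm)
    · intro h; exact absurd (Finset.mem_univ _) h
  have hmem : pc ∈ Submodule.span (Polynomial Fq) (Set.range fun i j => G i j) :=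
    (hGen pc).1 (by rw [harr]; exact hc)
  rw [Submodule.mem_span_range_iff_exists_fun] at hmem
  obtain ⟨a, ha⟩ := hmem
  have hpcj : ∀ j, pc j = ∑ i, a i * G i j := by
    intro j
    rw [← ha]
    simp [Finset.sum_apply]
  -- key orthogonality
  have hkey : ∀ β : F, ∀ v : Fin ℓ → F, v ∈ Vspace ℓ G β →
      ∑ j, v j * (∑ k : Fin m, algebraMap Fq F (c (((k : ℕ) : ZMod m), j)) * β ^ (k : ℕ)) = 0 := by
    intro β v hv
    have hrow : ∀ i, ∑ j, (aeval β) (G i j) * v j = 0 := by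
      intro i
      have := congrFun hv i
      simpa [Matrix.mulVec, dotProduct, Matrix.map_apply] using this
    have heval : ∀ j, (aeval β) (pc j)
        = ∑ k : Fin m, algebraMap Fq F (c (((k : ℕ) : ZMod m), j)) * β ^ (k : ℕ) := by
      intro j
      rw [hpc]
      simp only [map_sum, map_mul, map_pow, aeval_C, aeval_X]
    simp_rw [← heval]
    calc ∑ j, v j * (aeval β) (pc j)
        = ∑ j, ∑ i, (aeval β) (a i) * ((aeval β) (G i j) * v j) := by
          refine Finset.sum_congr rfl fun j _ => ?_
          rw [hpcj j, map_sum, Finset.mul_sum]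
          refine Finset.sum_congr rfl fun i _ => ?_
          rw [map_mul]; ring
      _ = ∑ i, (aeval β) (a i) * (∑ j, (aeval β) (G i j) * v j) := by
          rw [Finset.sum_comm]
          simp_rw [Finset.mul_sum]
      _ = 0 := by simp [hrow]
  set V : Set (Fin ℓ → F) := ⋂ β ∈ MN, Vspace ℓ G β with hV
  by_cases hcase : ∀ v ∈ V, ∀ kk : ZMod m, ∑ j, v j * algebraMap Fq F (c (kk, j)) = 0
  · -- eigencode case
    obtain ⟨⟨k0, j0⟩, hk0⟩ := Function.ne_iff.1 hc0
    set row : Fin ℓ → Fq := fun j => c (k0, j) with hrow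
    have hrowmem : row ∈ eigencode ℓ V := fun v hv => hcase v hv k0
    have hrowne : row ≠ 0 := Function.ne_iff.2 ⟨j0, hk0⟩
    have h1 : minDist (eigencode (Fq := Fq) ℓ V) ≤ (wt row : ℕ∞) :=
      sInf_le ⟨row, hrowmem, hrowne, rfl⟩
    have h2 : wt row ≤ wt c := by
      unfold wt
      apply Finset.card_le_card_of_injOn (fun j => (k0, j))
      · intro j hj
        simp only [Finset.mem_coe, Finset.mem_filter, Finset.mem_univ, true_and] at hj ⊢
        exact hj
      · intro x _ x' _ hxx'
        exact (Prod.mk.injEq _ _ _ _ ▸ hxx').2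
    refine le_trans (min_le_right _ _) (le_trans h1 ?_)
    exact_mod_cast h2
  · -- Roos case
    push_neg at hcase
    obtain ⟨v, hvV, kk, hkk⟩ := hcase
    set y : Fin m → F := fun i => ∑ j, v j * algebraMap Fq F (c (((i : ℕ) : ZMod m), j)) with hy
    have hyne : y ≠ 0 := by
      refine Function.ne_iff.2 ⟨⟨kk.val, ZMod.val_lt kk⟩, ?_⟩
      simp only [hy, Pi.zero_apply]
      have h2 : (((kk.val) : ℕ) : ZMod m) = kk := ZMod.natCast_rightInverse kk
      rw [h2]
      exact hkk
    have hyz : ∀ β ∈ MN, ∑ i : Fin m, y i * β ^ (i : ℕ) = 0 := by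
      intro β hβ
      have hvβ : v ∈ Vspace ℓ G β := Set.mem_iInter₂.1 hvV β hβ
      have hk := hkey β v hvβ
      rw [← hk]
      simp_rw [hy, Finset.sum_mul, Finset.mul_sum, mul_assoc]
      rw [Finset.sum_comm]
    have hcore := roos_core m α (α ^ r) hξ hαne M M' N MN hM hMN dN hDN hM'cons hMM' hcard
      y hyne hyz
    -- wt y ≤ wt c
    have hℓ : 0 < ℓ := by
      by_contra h
      have : IsEmpty (Fin ℓ) := by
        rw [not_lt, Nat.le_zero] at h
        rw [h]; exact Fin.isEmpty'
      exact hkk (by simp)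
    have hwy : wt y ≤ wt c := by
      unfold wt
      apply Finset.card_le_card_of_injOn (fun i =>
        ((((i : Fin m) : ℕ) : ZMod m),
          if h : ∃ j, c ((((i : Fin m) : ℕ) : ZMod m), j) ≠ 0 then h.choose else ⟨0, hℓ⟩))
      · intro i hi
        simp only [Finset.mem_coe, Finset.mem_filter, Finset.mem_univ, true_and] at hi ⊢
        have hex : ∃ j, c ((((i : Fin m) : ℕ) : ZMod m), j) ≠ 0 := by
          by_contra hno
          push_neg at hno
          apply hi
          rw [hy]
          simp only []
          refine Finset.sum_eq_zero fun j _ => ?_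
          rw [hno j, map_zero, mul_zero]
        rw [dif_pos hex]
        exact hex.choose_spec
      · intro x hx x' hx' hxx'
        have h1 : (((x : ℕ) : ZMod m)) = (((x' : ℕ) : ZMod m)) := (Prod.ext_iff.1 hxx').1
        have h2 : ((x : ℕ) : ZMod m).val = ((x' : ℕ) : ZMod m).val := by rw [h1]
        rw [ZMod.val_cast_of_lt x.isLt, ZMod.val_cast_of_lt x'.isLt] at h2
        exact Fin.ext h2
    refine le_trans (min_le_left _ _) ?_
    have hfinal : M.ncard + dN - 1 ≤ wt c := by omega
    exact_mod_cast hfinal
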